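/- Suppose that for every n ≥ 1 the linear maps T_n satisfy λ_{n+1} λ_n w²∘T_{n−1} + q⁴ λ_n λ_{n−1} T_{n+1}∘w² = (q+q³) λ_{n+1} λ_{n−1} w∘T_n∘w, and λ_{n−1} w²∘T_{n−1} + λ_{n+1} T_{n+1}∘w² = (q+q⁻¹) λ_n w∘T_n∘w. Then q λ_n T_{n+1} = λ_{n+1} w∘T_n∘w⁻¹ for every n ≥ 1. -/
import Mathlib


/-- `lam q n = λ_n = (1 - q^(2n))^(1/2)`, so `lam q 0 = 0`. -/
noncomputable def lam (q : ℝ) (n : ℕ) : ℝ := Real.sqrt (1 - q ^ (2 * n))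

/-- Elimination of the `A` term between the two recurrences, in an abstract module. -/
lemma combine_aux {M : Type*} [AddCommGroup M] [Module ℂ M]
    (a b c q u : ℂ) (ha : a ^ 2 = 1 - u) (hb : b ^ 2 = 1 - u * q ^ 2)
    (hc : c ^ 2 = 1 - u * q ^ 4) (hq : q ≠ 0) (hq4 : (1 : ℂ) - q ^ 4 ≠ 0)
    (A B C : M)
    (e1 : (c * b) • A + (q ^ 4 * b * a) • B = ((q + q ^ 3) * c * a) • C)
    (e2 : a • A + c • B = ((q + q⁻¹) * b) • C) :
    (q * b) • B = c • C := by
  have e2' : (q * a) • A + (q * c) • B = ((q ^ 2 + 1) * b) • C := by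
    have hcoe : q * ((q + q⁻¹) * b) = (q ^ 2 + 1) * b := by
      have h1 : q * q⁻¹ = 1 := mul_inv_cancel₀ hq
      calc q * ((q + q⁻¹) * b) = (q * q + q * q⁻¹) * b := by ring
        _ = (q ^ 2 + 1) * b := by rw [h1]; ring
    calc (q * a) • A + (q * c) • B = q • (a • A + c • B) := by
          rw [smul_add, smul_smul, smul_smul]
      _ = q • (((q + q⁻¹) * b) • C) := by rw [e2]
      _ = ((q ^ 2 + 1) * b) • C := by rw [smul_smul, hcoe]
  have z1 : (c * b) • A + (q ^ 4 * b * a) • B - ((q + q ^ 3) * c * a) • C = 0 :=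
    sub_eq_zero_of_eq e1
  have z2 : (q * a) • A + (q * c) • B - ((q ^ 2 + 1) * b) • C = 0 :=
    sub_eq_zero_of_eq e2'
  have hd : ((1 - q ^ 4) * (q * b)) • B - ((1 - q ^ 4) * c) • C =
      (c * b) • ((q * a) • A + (q * c) • B - ((q ^ 2 + 1) * b) • C)
        - (q * a) • ((c * b) • A + (q ^ 4 * b * a) • B - ((q + q ^ 3) * c * a) • C) := by
    match_scalars
    · linear_combination q ^ 5 * b * ha - q * b * hc
    · linear_combination (q ^ 2 + 1) * c * hb - (q ^ 2 + q ^ 4) * c * ha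
    · ring
  rw [z1, z2, smul_zero, smul_zero, sub_zero] at hd
  have h3 : (1 - q ^ 4) • ((q * b) • B) = (1 - q ^ 4) • (c • C) := by
    rw [smul_smul, smul_smul]; exact sub_eq_zero.mp hd
  exact smul_right_injective M hq4 h3

/-- Relations (l5-12) and (l5-15) from the proofs of Theorems 1 and 2 of the paper
imply relation (l5-16): `q λ_n T_{n+1} = λ_{n+1} w ∘ T_n ∘ w⁻¹`. -/
theorem rel_l5_16 (q : ℝ) (hq0 : 0 < q) (hq1 : q < 1)
    (V : Type*) [AddCommGroup V] [Module ℂ V]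
    (w : V ≃ₗ[ℂ] V) (T : ℕ → (V →ₗ[ℂ] V))
    (h1 : ∀ n : ℕ, 1 ≤ n →
      ((lam q (n + 1) * lam q n : ℝ) : ℂ) •
          (w.toLinearMap ∘ₗ w.toLinearMap ∘ₗ T (n - 1))
        + ((q ^ 4 * lam q n * lam q (n - 1) : ℝ) : ℂ) •
            (T (n + 1) ∘ₗ w.toLinearMap ∘ₗ w.toLinearMap)
        = (((q + q ^ 3) * lam q (n + 1) * lam q (n - 1) : ℝ) : ℂ) •
            (w.toLinearMap ∘ₗ T n ∘ₗ w.toLinearMap))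
    (h2 : ∀ n : ℕ, 1 ≤ n →
      ((lam q (n - 1) : ℝ) : ℂ) • (w.toLinearMap ∘ₗ w.toLinearMap ∘ₗ T (n - 1))
        + ((lam q (n + 1) : ℝ) : ℂ) • (T (n + 1) ∘ₗ w.toLinearMap ∘ₗ w.toLinearMap)
        = (((q + q⁻¹) * lam q n : ℝ) : ℂ) • (w.toLinearMap ∘ₗ T n ∘ₗ w.toLinearMap)) :
    ∀ n : ℕ, 1 ≤ n →
      ((q * lam q n : ℝ) : ℂ) • T (n + 1)
        = ((lam q (n + 1) : ℝ) : ℂ) • (w.toLinearMap ∘ₗ T n ∘ₗ w.symm.toLinearMap) := by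
  intro n hn
  have hqne : (q : ℂ) ≠ 0 := by
    exact_mod_cast ne_of_gt hq0
  have hq4 : (1 : ℂ) - (q : ℂ) ^ 4 ≠ 0 := by
    have : (q : ℝ) ^ 4 < 1 := pow_lt_one₀ hq0.le hq1 (by norm_num)
    have h' : (1 : ℝ) - q ^ 4 ≠ 0 := by linarith
    exact_mod_cast fun h => h' (by exact_mod_cast h)
  have lam_sq : ∀ k : ℕ, ((lam q k : ℝ) : ℂ) ^ 2 = 1 - ((q : ℂ) ^ (2 * k)) := by
    intro k
    have h0 : (0 : ℝ) ≤ 1 - q ^ (2 * k) := by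
      have : q ^ (2 * k) ≤ 1 := pow_le_one₀ hq0.le hq1.le
      linarith
    have h : (lam q k : ℝ) ^ 2 = 1 - q ^ (2 * k) := Real.sq_sqrt h0
    calc ((lam q k : ℝ) : ℂ) ^ 2 = ((lam q k ^ 2 : ℝ) : ℂ) := by push_cast; ring
      _ = 1 - (q : ℂ) ^ (2 * k) := by rw [h]; push_cast; ring
  -- set up for combine_aux with u = q^(2*(n-1))
  have e1 := h1 n hn
  have e2 := h2 n hn
  have hn1 : n - 1 + 1 = n := Nat.succ_pred_eq_of_pos hn
  have hu_a : ((lam q (n - 1) : ℝ) : ℂ) ^ 2 = 1 - (q : ℂ) ^ (2 * (n - 1)) := lam_sq _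
  have hu_b : ((lam q n : ℝ) : ℂ) ^ 2 = 1 - (q : ℂ) ^ (2 * (n - 1)) * (q : ℂ) ^ 2 := by
    rw [lam_sq n, ← pow_add]
    congr 2
    omega
  have hu_c : ((lam q (n + 1) : ℝ) : ℂ) ^ 2
      = 1 - (q : ℂ) ^ (2 * (n - 1)) * (q : ℂ) ^ 4 := by
    rw [lam_sq (n + 1), ← pow_add]
    congr 2
    omega
  have e1' : (((lam q (n + 1) : ℝ) : ℂ) * ((lam q n : ℝ) : ℂ)) •
        (w.toLinearMap ∘ₗ w.toLinearMap ∘ₗ T (n - 1))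
      + ((q : ℂ) ^ 4 * ((lam q n : ℝ) : ℂ) * ((lam q (n - 1) : ℝ) : ℂ)) •
          (T (n + 1) ∘ₗ w.toLinearMap ∘ₗ w.toLinearMap)
      = (((q : ℂ) + (q : ℂ) ^ 3) * ((lam q (n + 1) : ℝ) : ℂ) * ((lam q (n - 1) : ℝ) : ℂ)) •
          (w.toLinearMap ∘ₗ T n ∘ₗ w.toLinearMap) := by
    convert e1 using 2 <;> push_cast <;> ring
  have e2' : ((lam q (n - 1) : ℝ) : ℂ) • (w.toLinearMap ∘ₗ w.toLinearMap ∘ₗ T (n - 1))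
      + ((lam q (n + 1) : ℝ) : ℂ) • (T (n + 1) ∘ₗ w.toLinearMap ∘ₗ w.toLinearMap)
      = (((q : ℂ) + (q : ℂ)⁻¹) * ((lam q n : ℝ) : ℂ)) •
          (w.toLinearMap ∘ₗ T n ∘ₗ w.toLinearMap) := by
    convert e2 using 2
    push_cast
    ring
  have key := combine_aux ((lam q (n - 1) : ℝ) : ℂ) ((lam q n : ℝ) : ℂ)
    ((lam q (n + 1) : ℝ) : ℂ) (q : ℂ) ((q : ℂ) ^ (2 * (n - 1)))
    hu_a hu_b hu_c hqne hq4
    (w.toLinearMap ∘ₗ w.toLinearMap ∘ₗ T (n - 1))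
    (T (n + 1) ∘ₗ w.toLinearMap ∘ₗ w.toLinearMap)
    (w.toLinearMap ∘ₗ T n ∘ₗ w.toLinearMap) e1' e2'
  -- key : (q * λ_n) • (T (n+1) ∘ w ∘ w) = λ_{n+1} • (w ∘ T n ∘ w)
  ext v
  have hv := congrArg (fun f : V →ₗ[ℂ] V => f (w.symm (w.symm v))) key
  simp only [LinearMap.smul_apply, LinearMap.coe_comp, Function.comp_apply,
    LinearEquiv.coe_coe, LinearEquiv.apply_symm_apply] at hv
  simpa [LinearMap.smul_apply, LinearMap.coe_comp, Function.comp_apply] using hv
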